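/- Fix a finite state set S with a probability distribution d0 on S, a finite action set A, a reference policy π_ref with π_ref(a|s) > 0 for all s, a, β > 0, and a true reward r : S × A → ℝ. Let g : S × A → ℝ satisfy the pessimism condition g(s,a) ≤ r(s,a) for all (s,a). Let π_r and π_g be the Gibbs policies of r and g respectively, and let J denote the KL-regularized objective with reward r. Then J(π_r) − J(π_g) ≤ β · Σ_s d0(s) · Σ_a π_r(a|s) · (g(s,a) − r(s,a))². -/

import Mathlib

/-- The Gibbs policy associated with reward `g`, reference policy `πref` and
inverse temperature `β`. -/
noncomputable def gibbs {S A : Type*} [Fintype A]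
    (πref : S → A → ℝ) (β : ℝ) (g : S → A → ℝ) (s : S) (a : A) : ℝ :=
  πref s a * Real.exp (β * g s a) / ∑ a', πref s a' * Real.exp (β * g s a')

/-- The KL-regularized objective `J(π)` for true reward `r`. -/
noncomputable def J {S A : Type*} [Fintype S] [Fintype A] (d0 : S → ℝ)
    (πref : S → A → ℝ) (β : ℝ) (r : S → A → ℝ) (π : S → A → ℝ) : ℝ :=
  ∑ s, d0 s * ∑ a, π s a * (r s a - β⁻¹ * Real.log (π s a / πref s a))

open Finset

lemma exp_lin {u v : ℝ} : Real.exp u * (v - u + 1) ≤ Real.exp v := by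
  calc Real.exp u * (v - u + 1) ≤ Real.exp u * Real.exp (v - u) := by
        apply mul_le_mul_of_nonneg_left _ (Real.exp_pos u).le
        linarith [Real.add_one_le_exp (v - u)]
    _ = Real.exp v := by rw [← Real.exp_add]; ring_nf

/-- Pairwise inequality: for `u, v ≤ 0`,
`(u - v)(e^u - e^v) ≤ e^u v² + e^v u²`. -/
lemma pair_ineq {u v : ℝ} (hu : u ≤ 0) (hv : v ≤ 0) :
    (u - v) * (Real.exp u - Real.exp v) ≤ Real.exp u * v ^ 2 + Real.exp v * u ^ 2 := by
  rcases le_total v u with h | h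
  · have e1 : Real.exp u * (v - u + 1) ≤ Real.exp v := exp_lin
    have h2 : (u - v) ^ 2 ≤ v ^ 2 := by nlinarith
    nlinarith [Real.exp_pos u, Real.exp_pos v, sub_nonneg.2 h]
  · have e1 : Real.exp v * (u - v + 1) ≤ Real.exp u := exp_lin
    have h2 : (v - u) ^ 2 ≤ u ^ 2 := by nlinarith
    nlinarith [Real.exp_pos u, Real.exp_pos v, sub_nonneg.2 h]

/-- Jensen for exp (finite, weighted). -/
lemma exp_avg_le {A : Type*} [Fintype A] (p x : A → ℝ) (hp : ∀ a, 0 ≤ p a)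
    (hsum : ∑ a, p a = 1) :
    Real.exp (∑ a, p a * x a) ≤ ∑ a, p a * Real.exp (x a) := by
  set m := ∑ a, p a * x a with hm
  calc Real.exp m = ∑ a, p a * (Real.exp m * (1 + (x a - m))) := by
        have h1 : ∑ a, p a * (Real.exp m * (1 + (x a - m)))
            = Real.exp m * ∑ a, (p a + p a * x a - m * p a) := by
          rw [Finset.mul_sum]
          exact Finset.sum_congr rfl fun a _ => by ring
        rw [h1, Finset.sum_sub_distrib, Finset.sum_add_distrib, ← Finset.mul_sum,
          hsum, ← hm]
        ring
    _ ≤ ∑ a, p a * Real.exp (x a) := by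
        apply Finset.sum_le_sum
        intro a _
        apply mul_le_mul_of_nonneg_left _ (hp a)
        calc Real.exp m * (1 + (x a - m)) = Real.exp m * (x a - m + 1) := by ring
          _ ≤ Real.exp (x a) := exp_lin

/-- Key inequality: for nonpositive `x` and probability weights `p`,
`∑ p x e^x ≤ (∑ p x + ∑ p x²) · ∑ p e^x`. -/
lemma key_ineq {A : Type*} [Fintype A] (p x : A → ℝ) (hp : ∀ a, 0 ≤ p a)
    (hsum : ∑ a, p a = 1) (hx : ∀ a, x a ≤ 0) :
    ∑ a, p a * (x a * Real.exp (x a)) ≤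
      ((∑ a, p a * x a) + ∑ a, p a * x a ^ 2) * ∑ a, p a * Real.exp (x a) := by
  set E : A → ℝ := fun a => Real.exp (x a) with hE
  set s1 := ∑ a, p a * (x a * E a) with hs1
  set sx := ∑ a, p a * x a with hsx
  set sq := ∑ a, p a * x a ^ 2 with hsq
  set se := ∑ a, p a * E a with hse
  have hD1 : ∑ a, ∑ b, (p a * p b) * ((x a - x b) * (E a - E b))
      = 2 * s1 - 2 * (sx * se) := by
    have inner : ∀ a, ∑ b, (p a * p b) * ((x a - x b) * (E a - E b))
        = p a * (x a * E a) - (p a * x a) * se - (p a * E a) * sx + p a * s1 := by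
      intro a
      have h2 : ∑ b, (p a * p b) * ((x a - x b) * (E a - E b))
          = ∑ b, ((p a * (x a * E a)) * p b - (p a * x a) * (p b * E b)
              - (p a * E a) * (p b * x b) + p a * (p b * (x b * E b))) :=
        Finset.sum_congr rfl fun b _ => by ring
      rw [h2, Finset.sum_add_distrib, Finset.sum_sub_distrib, Finset.sum_sub_distrib,
        ← Finset.mul_sum, ← Finset.mul_sum, ← Finset.mul_sum, ← Finset.mul_sum,
        hsum, ← hse, ← hsx, ← hs1]
      ring
    rw [Finset.sum_congr rfl fun a _ => inner a]
    rw [Finset.sum_add_distrib, Finset.sum_sub_distrib, Finset.sum_sub_distrib,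
      ← Finset.sum_mul, ← Finset.sum_mul, ← Finset.sum_mul, ← hsx, ← hse, ← hs1, hsum]
    ring
  have hD2 : ∑ a, ∑ b, (p a * p b) * (E a * x b ^ 2 + E b * x a ^ 2)
      = 2 * (sq * se) := by
    have inner : ∀ a, ∑ b, (p a * p b) * (E a * x b ^ 2 + E b * x a ^ 2)
        = (p a * E a) * sq + (p a * x a ^ 2) * se := by
      intro a
      have h2 : ∑ b, (p a * p b) * (E a * x b ^ 2 + E b * x a ^ 2)
          = ∑ b, ((p a * E a) * (p b * x b ^ 2) + (p a * x a ^ 2) * (p b * E b)) :=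
        Finset.sum_congr rfl fun b _ => by ring
      rw [h2, Finset.sum_add_distrib, ← Finset.mul_sum, ← Finset.mul_sum, ← hsq, ← hse]
    rw [Finset.sum_congr rfl fun a _ => inner a]
    rw [Finset.sum_add_distrib, ← Finset.sum_mul, ← Finset.sum_mul, ← hse, ← hsq]
    ring
  have hle : ∑ a, ∑ b, (p a * p b) * ((x a - x b) * (E a - E b))
      ≤ ∑ a, ∑ b, (p a * p b) * (E a * x b ^ 2 + E b * x a ^ 2) := by
    apply Finset.sum_le_sum; intro a _
    apply Finset.sum_le_sum; intro b _
    exact mul_le_mul_of_nonneg_left (pair_ineq (hx a) (hx b)) (mul_nonneg (hp a) (hp b))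
  rw [hD1, hD2] at hle
  nlinarith [hle]


section
variable {S A : Type*} [Fintype A] [Nonempty A]
  (πref : S → A → ℝ) (β : ℝ) (s : S)

lemma Zpos (hπ : ∀ a, 0 < πref s a) (h : S → A → ℝ) :
    0 < ∑ a', πref s a' * Real.exp (β * h s a') :=
  Finset.sum_pos (fun a _ => mul_pos (hπ a) (Real.exp_pos _)) Finset.univ_nonempty

lemma gibbs_pos (hπ : ∀ a, 0 < πref s a) (h : S → A → ℝ) (a : A) :
    0 < gibbs πref β h s a :=
  div_pos (mul_pos (hπ a) (Real.exp_pos _)) (Zpos πref β s hπ h)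

lemma gibbs_sum (hπ : ∀ a, 0 < πref s a) (h : S → A → ℝ) :
    ∑ a, gibbs πref β h s a = 1 := by
  unfold gibbs
  rw [← Finset.sum_div]
  exact div_self (Zpos πref β s hπ h).ne'

lemma gibbs_log (hπ : ∀ a, 0 < πref s a) (h : S → A → ℝ) (a : A) :
    Real.log (gibbs πref β h s a / πref s a)
      = β * h s a - Real.log (∑ a', πref s a' * Real.exp (β * h s a')) := by
  have hZ := Zpos πref β s hπ h
  have h1 : gibbs πref β h s a / πref s a
      = Real.exp (β * h s a) / ∑ a', πref s a' * Real.exp (β * h s a') := by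
    unfold gibbs
    rw [div_div, mul_comm (πref s a) (Real.exp (β * h s a)),
      mul_div_mul_right _ _ (hπ a).ne']
  rw [h1, Real.log_div (Real.exp_ne_zero _) hZ.ne', Real.log_exp]

end

section
variable {S A : Type*} [Fintype A] [Nonempty A]

lemma gibbs_contrib (πref : S → A → ℝ) {β : ℝ} (hβ : 0 < β) (s : S)
    (hπ : ∀ a, 0 < πref s a) (r h : S → A → ℝ) :
    ∑ a, gibbs πref β h s a * (r s a - β⁻¹ * Real.log (gibbs πref β h s a / πref s a))
      = (∑ a, gibbs πref β h s a * (r s a - h s a))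
        + β⁻¹ * Real.log (∑ a', πref s a' * Real.exp (β * h s a')) := by
  have step : ∀ a, gibbs πref β h s a
        * (r s a - β⁻¹ * Real.log (gibbs πref β h s a / πref s a))
      = gibbs πref β h s a * (r s a - h s a)
        + gibbs πref β h s a
          * (β⁻¹ * Real.log (∑ a', πref s a' * Real.exp (β * h s a'))) := by
    intro a
    rw [gibbs_log πref β s hπ h a]
    have hb : β⁻¹ * (β * h s a) = h s a := by field_simp
    have : r s a - β⁻¹ * (β * h s a - Real.log (∑ a', πref s a' * Real.exp (β * h s a')))
        = (r s a - h s a)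
          + β⁻¹ * Real.log (∑ a', πref s a' * Real.exp (β * h s a')) := by
      rw [mul_sub, hb]; ring
    rw [this, mul_add]
  rw [Finset.sum_congr rfl fun a _ => step a, Finset.sum_add_distrib,
    ← Finset.sum_mul, gibbs_sum πref β s hπ h, one_mul]

end

lemma state_bound {S A : Type*} [Fintype A] [Nonempty A]
    (πref : S → A → ℝ) {β : ℝ} (hβ : 0 < β) (s : S)
    (hπ : ∀ a, 0 < πref s a) (r g : S → A → ℝ) (hpess : ∀ a, g s a ≤ r s a) :
    (∑ a, gibbs πref β r s a * (r s a - β⁻¹ * Real.log (gibbs πref β r s a / πref s a)))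
      - ∑ a, gibbs πref β g s a * (r s a - β⁻¹ * Real.log (gibbs πref β g s a / πref s a))
      ≤ β * ∑ a, gibbs πref β r s a * (g s a - r s a) ^ 2 := by
  set Zr := ∑ a', πref s a' * Real.exp (β * r s a') with hZr
  set Zg := ∑ a', πref s a' * Real.exp (β * g s a') with hZg
  have hZrpos : 0 < Zr := Zpos πref β s hπ r
  have hZgpos : 0 < Zg := Zpos πref β s hπ g
  set p : A → ℝ := fun a => gibbs πref β r s a with hps
  set x : A → ℝ := fun a => β * (g s a - r s a) with hxs
  have hp : ∀ a, 0 ≤ p a := fun a => (gibbs_pos πref β s hπ r a).le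
  have hpsum : ∑ a, p a = 1 := gibbs_sum πref β s hπ r
  have hx : ∀ a, x a ≤ 0 := fun a =>
    mul_nonpos_of_nonneg_of_nonpos hβ.le (sub_nonpos.2 (hpess a))
  set F := ∑ a, p a * Real.exp (x a) with hF
  have hFpos : 0 < F :=
    Finset.sum_pos (fun a _ => mul_pos (gibbs_pos πref β s hπ r a) (Real.exp_pos _))
      Finset.univ_nonempty
  -- πref s a * exp (β * g s a) = Zr * (p a * exp (x a))
  have hnum : ∀ a, πref s a * Real.exp (β * g s a) = Zr * (p a * Real.exp (x a)) := by
    intro a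
    have : p a = πref s a * Real.exp (β * r s a) / Zr := rfl
    rw [this]
    rw [show β * g s a = β * r s a + x a by rw [hxs]; ring, Real.exp_add]
    field_simp
  have hZgF : Zg = Zr * F := by
    rw [hZg, hF, Finset.mul_sum]
    exact Finset.sum_congr rfl fun a _ => hnum a
  have hgibbsg : ∀ a, gibbs πref β g s a = p a * Real.exp (x a) / F := by
    intro a
    show πref s a * Real.exp (β * g s a) / Zg = _
    rw [hnum a, hZgF, mul_comm Zr (p a * Real.exp (x a)), mul_comm Zr F,
      mul_div_mul_right _ _ hZrpos.ne']
  -- rewrite both contributions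
  rw [gibbs_contrib πref hβ s hπ r r, gibbs_contrib πref hβ s hπ r g]
  have hzero : ∑ a, gibbs πref β r s a * (r s a - r s a) = 0 := by
    simp
  rw [hzero, zero_add, ← hZr, ← hZg, hZgF,
    Real.log_mul hZrpos.ne' hFpos.ne']
  -- now goal: β⁻¹ log Zr - (∑ gibbs_g (r - g) + β⁻¹ (log Zr + log F)) ≤ β ∑ p (g-r)^2
  have hrg : ∀ a, gibbs πref β g s a * (r s a - g s a)
      = β⁻¹ * (p a * (x a * Real.exp (x a)) / F * (-1)) := by
    intro a
    rw [hgibbsg a]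
    have : r s a - g s a = -(β⁻¹ * x a) := by rw [hxs]; field_simp; ring
    rw [this]
    field_simp
  rw [Finset.sum_congr rfl fun a _ => hrg a, ← Finset.mul_sum]
  have hsq : ∀ a, gibbs πref β r s a * (g s a - r s a) ^ 2
      = β⁻¹ * (β⁻¹ * (p a * x a ^ 2)) := by
    intro a
    have : g s a - r s a = β⁻¹ * x a := by rw [hxs]; field_simp
    rw [this]
    show p a * (β⁻¹ * x a) ^ 2 = _
    ring
  rw [Finset.sum_congr rfl fun a _ => hsq a, ← Finset.mul_sum, ← Finset.mul_sum]
  -- reduce to the core inequality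
  have core : -Real.log F + (∑ a, p a * (x a * Real.exp (x a))) / F
      ≤ ∑ a, p a * x a ^ 2 := by
    have jens : ∑ a, p a * x a ≤ Real.log F := by
      have := exp_avg_le p x hp hpsum
      calc ∑ a, p a * x a = Real.log (Real.exp (∑ a, p a * x a)) :=
            (Real.log_exp _).symm
        _ ≤ Real.log F := Real.log_le_log (Real.exp_pos _) this
    have keyi := key_ineq p x hp hpsum hx
    have hdiv : (∑ a, p a * (x a * Real.exp (x a))) / F
        ≤ (∑ a, p a * x a) + ∑ a, p a * x a ^ 2 :=
      (div_le_iff₀ hFpos).2 keyi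
    linarith
  have hsums : ∀ a, p a * (x a * Real.exp (x a)) / F
      = p a * (x a * Real.exp (x a)) / F := fun a => rfl
  -- final algebra
  have hbinv : 0 < β⁻¹ := inv_pos.2 hβ
  have expand : β * (β⁻¹ * (β⁻¹ * ∑ a, p a * x a ^ 2))
      = β⁻¹ * ∑ a, p a * x a ^ 2 := by
    field_simp
  rw [expand]
  have hneg : ∑ a, p a * (x a * Real.exp (x a)) / F * (-1)
      = -((∑ a, p a * (x a * Real.exp (x a))) / F) := by
    rw [Finset.sum_div, ← Finset.sum_neg_distrib]
    exact Finset.sum_congr rfl fun a _ => by ring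
  rw [hneg]
  have lhs_eq : β⁻¹ * Real.log Zr
      - (β⁻¹ * -((∑ a, p a * (x a * Real.exp (x a))) / F)
          + β⁻¹ * (Real.log Zr + Real.log F))
      = β⁻¹ * (-Real.log F + (∑ a, p a * (x a * Real.exp (x a))) / F) := by
    ring
  rw [lhs_eq]
  exact mul_le_mul_of_nonneg_left core hbinv.le


theorem stmt_16 {S A : Type*} [Fintype S] [Fintype A] [Nonempty A]
    (d0 : S → ℝ) (hd0 : ∀ s, 0 ≤ d0 s) (hd0sum : ∑ s, d0 s = 1)
    (πref : S → A → ℝ) (hπ : ∀ s a, 0 < πref s a) (hπsum : ∀ s, ∑ a, πref s a = 1)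
    (β : ℝ) (hβ : 0 < β) (r g : S → A → ℝ)
    (hpess : ∀ s a, g s a ≤ r s a) :
    J d0 πref β r (gibbs πref β r) - J d0 πref β r (gibbs πref β g) ≤
      β * ∑ s, d0 s * ∑ a, gibbs πref β r s a * (g s a - r s a) ^ 2 := by
  unfold J
  rw [← Finset.sum_sub_distrib]
  have step : ∀ s ∈ Finset.univ, d0 s
        * (∑ a, gibbs πref β r s a
            * (r s a - β⁻¹ * Real.log (gibbs πref β r s a / πref s a)))
      - d0 s * (∑ a, gibbs πref β g s a
            * (r s a - β⁻¹ * Real.log (gibbs πref β g s a / πref s a)))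
      ≤ d0 s * (β * ∑ a, gibbs πref β r s a * (g s a - r s a) ^ 2) := by
    intro s _
    rw [← mul_sub]
    exact mul_le_mul_of_nonneg_left
      (state_bound πref hβ s (hπ s) r g (hpess s)) (hd0 s)
  calc ∑ s, (d0 s * (∑ a, gibbs πref β r s a
          * (r s a - β⁻¹ * Real.log (gibbs πref β r s a / πref s a)))
        - d0 s * (∑ a, gibbs πref β g s a
          * (r s a - β⁻¹ * Real.log (gibbs πref β g s a / πref s a))))
      ≤ ∑ s, d0 s * (β * ∑ a, gibbs πref β r s a * (g s a - r s a) ^ 2) :=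
        Finset.sum_le_sum step
    _ = β * ∑ s, d0 s * ∑ a, gibbs πref β r s a * (g s a - r s a) ^ 2 := by
        rw [Finset.mul_sum]
        exact Finset.sum_congr rfl fun s _ => by ring
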